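/- arXiv:1608.01112 — 2 statements merged into one kernel-verified Lean document; each statement's English description precedes it below -/
import Mathlib

section
/- Let Φ be a functor from the simplex category Δ to the category of finite directed graphs that is faithful. Then for every n, setting G_n = Φ([n]), G_0 with vertex set of size a+1, and letting x̄^j be the tuple (Φ(g_j)(0),…,Φ(g_j)(a)) for the j-th monotone map g_j : [0] → [n], the first-order formula η (asserting existence of a homomorphic image of G_1 whose restrictions along Φ(f_s) and Φ(f_t) give the two tuples) satisfies: G_n ⊨ η(x̄^i, x̄^j) if i < j. -/
/-- A homomorphism of digraphs maps arcs to arcs. -/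
def Digraph.IsHom {V W : Type*} (G : Digraph V) (H : Digraph W) (f : V → W) : Prop :=
  ∀ u v, G.Adj u v → H.Adj (f u) (f v)

/-- An oriented graph: at most one arc between any two vertices (hence no loops). -/
def Digraph.Oriented {V : Type*} (G : Digraph V) : Prop :=
  ∀ u v, G.Adj u v → ¬ G.Adj v u

/-- The arcs of a digraph. -/
def Digraph.Arcs {V : Type*} (G : Digraph V) : Type _ := {p : V × V // G.Adj p.1 p.2}

/-- Vertex type of the replacement construction `G*(I,a,b)`: original vertices plus, for
each arc, the internal vertices of a copy of the cycle of length `L` with distinguished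
vertices `a` (position `0`) and `b` (position `d+1`). -/
def RVert {V : Type*} (G : Digraph V) (L d : ℕ) : Type _ :=
  V ⊕ (G.Arcs × {i : Fin L // i.val ≠ 0 ∧ i.val ≠ d + 1})

/-- The vertex of `G*(I,a,b)` corresponding to position `i` on the cycle copy of arc `e`:
position `0` (the vertex `a`) is identified with the tail, position `d+1` (the vertex `b`)
with the head of `e`. -/
def toVert {V : Type*} (G : Digraph V) (L d : ℕ) (e : G.Arcs) (i : Fin L) : RVert G L d :=
  if h0 : i.val = 0 then Sum.inl e.1.1
  else if h1 : i.val = d + 1 then Sum.inl e.1.2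
  else Sum.inr (e, ⟨i, h0, h1⟩)

/-- Cyclic successor on `Fin m`. -/
def cyc {m : ℕ} (k : Fin m) : Fin m := ⟨(k.val + 1) % m, Nat.mod_lt _ k.pos⟩

/-- The replacement construction `G*(I,a,b)`: each arc of `G` is replaced by a disjoint copy
of the directed cycle of length `L` whose distinguished vertices `a`, `b` (at directed
distance `d+1` along the cycle) are identified with tail and head of the arc. -/
def Replace {V : Type*} (G : Digraph V) (L d : ℕ) : Digraph (RVert G L d) where
  Adj x y := ∃ (e : G.Arcs) (i : Fin L), x = toVert G L d e i ∧ y = toVert G L d e (cyc i)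

/-- Image of an arc under a digraph homomorphism. -/
def Digraph.mapArc {V W : Type*} (G : Digraph V) (H : Digraph W) (g : V → W)
    (hg : G.IsHom H g) : G.Arcs → H.Arcs :=
  fun e => ⟨(g e.1.1, g e.1.2), hg _ _ e.2⟩

/-- Action of the replacement functor on homomorphisms. -/
def RMap {V W : Type*} (G : Digraph V) (H : Digraph W) (L d : ℕ) (g : V → W)
    (hg : G.IsHom H g) : RVert G L d → RVert H L d :=
  Sum.map g (fun p => (G.mapArc H g hg p.1, p.2))

/-- The underlying undirected (simple) graph of a digraph. -/
def Digraph.underlying {V : Type*} (G : Digraph V) : SimpleGraph V where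
  Adj u v := u ≠ v ∧ (G.Adj u v ∨ G.Adj v u)
  symm := ⟨fun _ _ h => ⟨Ne.symm h.1, h.2.symm⟩⟩
  loopless := ⟨fun _ h => h.1 rfl⟩

/-- Auxiliary (oriented) relation of the `d`-th subdivision of a simple graph: each edge is
replaced by a path with `d` internal vertices; the smaller endpoint of an edge attaches at
position `0`, the larger at position `d-1`. For `d = 0`, original adjacency is kept. -/
def SubdivRel {V : Type*} [LinearOrder V] (H : SimpleGraph V) (d : ℕ) :
    (V ⊕ (H.edgeSet × Fin d)) → (V ⊕ (H.edgeSet × Fin d)) → Prop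
  | Sum.inl u, Sum.inl v => d = 0 ∧ H.Adj u v
  | Sum.inl u, Sum.inr (e, i) =>
      (i.val = 0 ∧ u ∈ e.val ∧ ∀ w ∈ e.val, u ≤ w) ∨
      (i.val = d - 1 ∧ u ∈ e.val ∧ ∀ w ∈ e.val, w ≤ u)
  | Sum.inr _, Sum.inl _ => False
  | Sum.inr (e, i), Sum.inr (e', j) => e = e' ∧ j.val = i.val + 1

/-- The `d`-th subdivision `Sub_d(H)` of a simple graph `H`: every edge is replaced by a
path with `d` internal vertices. -/
def Subdiv {V : Type*} [LinearOrder V] (H : SimpleGraph V) (d : ℕ) :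
    SimpleGraph (V ⊕ (H.edgeSet × Fin d)) where
  Adj x y := SubdivRel H d x y ∨ SubdivRel H d y x
  symm := ⟨fun _ _ h => h.symm⟩
  loopless := ⟨by
    rintro (u | ⟨e, i⟩) h
    · rcases h with ⟨_, h⟩ | ⟨_, h⟩ <;> exact H.loopless.irrefl u h
    · rcases h with ⟨_, h⟩ | ⟨_, h⟩ <;> simp [SubdivRel] at h⟩

/-- `f` embeds `H` as a (not necessarily induced) subgraph of `G`. -/
def IsSubgraphEmb {V W : Type*} (H : SimpleGraph V) (G : SimpleGraph W) (f : V → W) : Prop :=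
  Function.Injective f ∧ ∀ u v, H.Adj u v → G.Adj (f u) (f v)

/-- A class of finite graphs, one vertex set `Fin n` for each size. -/
abbrev GraphClass := Set (Σ n, SimpleGraph (Fin n))

/-- `H` is a subgraph of some member of the class `C`. -/
def ContainsAsSubgraph (C : GraphClass) {V : Type*} (H : SimpleGraph V) : Prop :=
  ∃ (n : ℕ) (G : SimpleGraph (Fin n)), ⟨n, G⟩ ∈ C ∧ ∃ f : V → Fin n, IsSubgraphEmb H G f

/-- `C` is monotone: closed under taking (not necessarily induced) subgraphs. -/
def MonotoneClass (C : GraphClass) : Prop :=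
  ∀ (n : ℕ) (G : SimpleGraph (Fin n)) (m : ℕ) (H : SimpleGraph (Fin m)),
    ⟨n, G⟩ ∈ C → (∃ f, IsSubgraphEmb H G f) → ⟨m, H⟩ ∈ C

/-- `C` is nowhere dense: for every `p` there is `N` such that the `p`-th subdivision of
`K_N` is a subgraph of no member of `C`. -/
def NowhereDense (C : GraphClass) : Prop :=
  ∀ p : ℕ, ∃ N : ℕ, ¬ ContainsAsSubgraph C (Subdiv (⊤ : SimpleGraph (Fin N)) p)

/-- The map `f_s : [0] → [1]` of the simplex category, sending `0` to `0`. -/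
def fs : Fin (0 + 1) →o Fin (1 + 1) := ⟨fun _ => 0, monotone_const⟩

/-- The map `f_t : [0] → [1]` of the simplex category, sending `0` to `1`. -/
def ft : Fin (0 + 1) →o Fin (1 + 1) := ⟨fun _ => 1, monotone_const⟩

/-- The `j`-th monotone map `g_j : [0] → [n]`, the constant map with value `j`. -/
def cmap (n : ℕ) (j : Fin (n + 1)) : Fin (0 + 1) →o Fin (n + 1) := ⟨fun _ => j, monotone_const⟩

/-- A functor from the simplex category `Δ` to the category of finite directed graphs:
objects `[n]` are sent to digraphs on `Fin (size n)`, monotone maps to digraph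
homomorphisms, functorially. -/
structure DeltaFunctor where
  size : ℕ → ℕ
  obj : ∀ n : ℕ, Digraph (Fin (size n))
  map : ∀ {m n : ℕ}, (Fin (m + 1) →o Fin (n + 1)) → (Fin (size m) → Fin (size n))
  map_hom : ∀ {m n : ℕ} (f : Fin (m + 1) →o Fin (n + 1)), (obj m).IsHom (obj n) (map f)
  map_id : ∀ n : ℕ, map (OrderHom.id : Fin (n + 1) →o Fin (n + 1)) = id
  map_comp : ∀ {m n p : ℕ} (f : Fin (m + 1) →o Fin (n + 1)) (g : Fin (n + 1) →o Fin (p + 1)),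
    map (g.comp f) = map g ∘ map f

/-- `Φ` is faithful: injective on hom-sets. -/
def DeltaFunctor.Faithful (Φ : DeltaFunctor) : Prop :=
  ∀ (m n : ℕ) (f f' : Fin (m + 1) →o Fin (n + 1)), Φ.map f = Φ.map f' → f = f'

/-- The meaning of the first-order formula `η(x̄,ȳ)`: there exist `z_0, …, z_b` forming a
homomorphism `h` of `G₁` into the ambient digraph `D` with `x i = z (φ_s i)` and
`y i = z (φ_t i)` for all `i`. -/
def EtaSem {A B W : Type*} (G₁ : Digraph B) (phs pht : A → B) (D : Digraph W)
    (x y : A → W) : Prop :=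
  ∃ z : B → W, G₁.IsHom D z ∧ (∀ i, x i = z (phs i)) ∧ (∀ i, y i = z (pht i))

/-- For a faithful functor `Φ : Δ → DiGraph`, setting `G_n = Φ([n])` and
`x̄^j = Φ(g_j)` (as a tuple indexed by the vertices of `G_0`), the formula `η` (asserting
factorization through a homomorphic copy of `G_1` along `Φ(f_s)`, `Φ(f_t)`) satisfies
`G_n ⊨ η(x̄^i, x̄^j)` whenever `i < j`. -/
theorem stmt8 (Φ : DeltaFunctor) (hfaith : Φ.Faithful) (n : ℕ) (i j : Fin (n + 1))
    (hij : i < j) :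
    EtaSem (Φ.obj 1) (Φ.map fs) (Φ.map ft) (Φ.obj n)
      (fun v => Φ.map (cmap n i) v) (fun v => Φ.map (cmap n j) v) := by
  have hmono : Monotone (fun k : Fin (1 + 1) => if k = 0 then i else j) := by
    intro a b hab
    by_cases ha : a = 0 <;> by_cases hb : b = 0 <;> simp [ha, hb]
    · exact le_of_lt hij
    · exact absurd (le_antisymm (hb ▸ hab) (Fin.zero_le _)) ha
  refine ⟨Φ.map ⟨fun k => if k = 0 then i else j, hmono⟩, Φ.map_hom _, ?_, ?_⟩
  · intro v
    have : cmap n i = OrderHom.comp ⟨fun k => if k = 0 then i else j, hmono⟩ fs := by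
      ext k; simp [cmap, fs]
    rw [this, Φ.map_comp]; rfl
  · intro v
    have : cmap n j = OrderHom.comp ⟨fun k => if k = 0 then i else j, hmono⟩ ft := by
      ext k; simp [cmap, ft]
    rw [this, Φ.map_comp]; rfl
end

section
/- The class of graphs of the form underlying(G*(C_{2n}, a, b)), where G ranges over all finite oriented graphs and n = |V(G)|, is nowhere dense: for every d ≥ 1 and every N ≥ d + 3, the d-th subdivision of K_N is a subgraph of no graph in this class. -/
section Helpers

variable {V : Type*} {G : Digraph V}

lemma toVert_eq_inl {L D : ℕ} {e : G.Arcs} {i : Fin L} {x : V}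
    (h : toVert G L D e i = Sum.inl x) :
    (i.val = 0 ∧ x = e.1.1) ∨ (i.val = D + 1 ∧ x = e.1.2) := by
  by_cases h0 : i.val = 0
  · simp only [toVert, h0, ↓reduceDIte] at h
    exact Or.inl ⟨h0, (Sum.inl.inj h).symm⟩
  · by_cases h1 : i.val = D + 1
    · simp only [toVert, h0, h1, Nat.add_one_ne_zero, ↓reduceDIte] at h
      exact Or.inr ⟨h1, (Sum.inl.inj h).symm⟩
    · simp only [toVert, h0, h1, ↓reduceDIte] at h
      exact (Sum.inr_ne_inl h).elim

lemma toVert_eq_inr {L D : ℕ} {e e' : G.Arcs} {i : Fin L}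
    {p : {i : Fin L // i.val ≠ 0 ∧ i.val ≠ D + 1}}
    (h : toVert G L D e i = Sum.inr (e', p)) : e = e' ∧ i = p.1 := by
  by_cases h0 : i.val = 0
  · simp only [toVert, h0, ↓reduceDIte] at h
    exact (Sum.inl_ne_inr h).elim
  · by_cases h1 : i.val = D + 1
    · simp only [toVert, h0, h1, Nat.add_one_ne_zero, ↓reduceDIte] at h
      exact (Sum.inl_ne_inr h).elim
    · simp only [toVert, h0, h1, ↓reduceDIte] at h
      injection h with h
      injection h with he hp
      exact ⟨he, by have := congrArg Subtype.val hp; simpa using this⟩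

lemma aux_mod {L i q : ℕ} (hi : i < L) (h : (i + 1) % L = q) :
    i = (q + L - 1) % L := by
  rcases Nat.lt_or_ge (i + 1) L with h' | h'
  · have hq : q = i + 1 := by rw [← h, Nat.mod_eq_of_lt h']
    subst hq
    have h2 : i + 1 + L - 1 = i + L := by omega
    rw [h2, Nat.add_mod_right, Nat.mod_eq_of_lt hi]
  · have hiL : i + 1 = L := by omega
    have hq : q = 0 := by rw [← h, hiL, Nat.mod_self]
    subst hq
    have h2 : 0 + L - 1 = L - 1 := by omega
    rw [h2, Nat.mod_eq_of_lt (by omega)]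
    omega

/-- Any neighbour of an internal vertex is one of two explicit vertices. -/
lemma neighbors_of_inr {L D : ℕ} {e : G.Arcs}
    {p : {i : Fin L // i.val ≠ 0 ∧ i.val ≠ D + 1}} {z : RVert G L D}
    (h : (Replace G L D).underlying.Adj (Sum.inr (e, p)) z) :
    z = toVert G L D e (cyc p.1) ∨
      z = toVert G L D e ⟨(p.1.val + L - 1) % L, Nat.mod_lt _ p.1.pos⟩ := by
  obtain ⟨hne, hadj | hadj⟩ := h
  · obtain ⟨e', i, h1, h2⟩ := hadj
    obtain ⟨he, hi⟩ := toVert_eq_inr h1.symm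
    subst he
    left; rw [h2, hi]
  · obtain ⟨e', i, h1, h2⟩ := hadj
    obtain ⟨he, hi⟩ := toVert_eq_inr h2.symm
    subst he
    right
    rw [h1]
    congr 1
    have hv : i.val = (p.1.val + L - 1) % L := by
      apply aux_mod i.isLt
      have := congrArg Fin.val hi
      simpa [cyc] using this
    exact Fin.ext hv

/-- A vertex with three distinct neighbours in the replacement graph is an original vertex. -/
lemma inl_of_three_neighbors {L D : ℕ} {w a b c : RVert G L D}
    (ha : (Replace G L D).underlying.Adj w a)
    (hb : (Replace G L D).underlying.Adj w b)
    (hc : (Replace G L D).underlying.Adj w c)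
    (hab : a ≠ b) (hac : a ≠ c) (hbc : b ≠ c) :
    ∃ x, w = Sum.inl x := by
  rcases w with x | ⟨e, p⟩
  · exact ⟨x, rfl⟩
  · exfalso
    rcases neighbors_of_inr ha with h1 | h1 <;>
    rcases neighbors_of_inr hb with h2 | h2 <;>
    rcases neighbors_of_inr hc with h3 | h3 <;>
      first
        | exact hab (h1.trans h2.symm)
        | exact hac (h1.trans h3.symm)
        | exact hbc (h2.trans h3.symm)

end Helpers

section Helpers2

variable {V : Type*} {G : Digraph V}

lemma adj_inr_inr_val {L D : ℕ} {e e' : G.Arcs}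
    {p q : {i : Fin L // i.val ≠ 0 ∧ i.val ≠ D + 1}}
    (h : (Replace G L D).underlying.Adj (Sum.inr (e, p)) (Sum.inr (e', q))) :
    e = e' ∧ (q.1.val = p.1.val + 1 ∨ p.1.val = q.1.val + 1) := by
  obtain ⟨hne, hadj | hadj⟩ := h
  · obtain ⟨e'', i, h1, h2⟩ := hadj
    obtain ⟨he, hi⟩ := toVert_eq_inr h1.symm
    subst he; subst hi
    obtain ⟨he', hi'⟩ := toVert_eq_inr h2.symm
    have hv := congrArg Fin.val hi'
    simp only [cyc] at hv
    refine ⟨he', Or.inl ?_⟩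
    have h0 : q.1.val ≠ 0 := q.2.1
    have hlt : p.1.val < L := p.1.isLt
    rcases Nat.lt_or_ge (p.1.val + 1) L with h' | h'
    · rw [Nat.mod_eq_of_lt h'] at hv; omega
    · have : p.1.val + 1 = L := by omega
      rw [this, Nat.mod_self] at hv; omega
  · obtain ⟨e'', i, h1, h2⟩ := hadj
    obtain ⟨he, hi⟩ := toVert_eq_inr h1.symm
    subst he; subst hi
    obtain ⟨he', hi'⟩ := toVert_eq_inr h2.symm
    have hv := congrArg Fin.val hi'
    simp only [cyc] at hv
    refine ⟨he'.symm, Or.inr ?_⟩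
    have h0 : p.1.val ≠ 0 := p.2.1
    have hlt : q.1.val < L := q.1.isLt
    rcases Nat.lt_or_ge (q.1.val + 1) L with h' | h'
    · rw [Nat.mod_eq_of_lt h'] at hv; omega
    · have : q.1.val + 1 = L := by omega
      rw [this, Nat.mod_self] at hv; omega

lemma adj_inl_inr_val {n : ℕ} (hn : 2 ≤ n) {x : V} {e : G.Arcs}
    {p : {i : Fin (2 * n) // i.val ≠ 0 ∧ i.val ≠ (n - 1) + 1}}
    (h : (Replace G (2 * n) (n - 1)).underlying.Adj (Sum.inl x) (Sum.inr (e, p))) :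
    (x = e.1.1 ∧ (p.1.val = 1 ∨ p.1.val + 1 = 2 * n)) ∨
      (x = e.1.2 ∧ (p.1.val = n + 1 ∨ p.1.val + 1 = n)) := by
  have hD : n - 1 + 1 = n := by omega
  obtain ⟨hne, hadj | hadj⟩ := h
  · obtain ⟨e'', i, h1, h2⟩ := hadj
    obtain ⟨he, hi⟩ := toVert_eq_inr h2.symm
    subst he
    have hv := congrArg Fin.val hi
    simp only [cyc] at hv
    rcases toVert_eq_inl h1.symm with ⟨h0, hx⟩ | ⟨h0, hx⟩
    · left
      refine ⟨hx, Or.inl ?_⟩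
      rw [h0] at hv
      rw [← hv, Nat.mod_eq_of_lt (by omega)]
    · right
      refine ⟨hx, Or.inl ?_⟩
      have h0n : i.val = n := by omega
      rw [h0n] at hv
      rw [← hv, Nat.mod_eq_of_lt (by omega)]
  · obtain ⟨e'', i, h1, h2⟩ := hadj
    obtain ⟨he, hi⟩ := toVert_eq_inr h1.symm
    subst he; subst hi
    rcases toVert_eq_inl h2.symm with ⟨h0, hx⟩ | ⟨h0, hx⟩
    · left
      refine ⟨hx, Or.inr ?_⟩
      simp only [cyc] at h0
      have hlt : p.1.val < 2 * n := p.1.isLt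
      rcases Nat.lt_or_ge (p.1.val + 1) (2 * n) with h' | h'
      · rw [Nat.mod_eq_of_lt h'] at h0; omega
      · omega
    · right
      refine ⟨hx, Or.inr ?_⟩
      simp only [cyc] at h0
      have hlt : p.1.val < 2 * n := p.1.isLt
      rcases Nat.lt_or_ge (p.1.val + 1) (2 * n) with h' | h'
      · rw [Nat.mod_eq_of_lt h'] at h0; omega
      · have h2n : p.1.val + 1 = 2 * n := by omega
        rw [h2n, Nat.mod_self] at h0; omega

lemma no_adj_inl_inl {n : ℕ} (hn : 2 ≤ n) {x y : V} :
    ¬ (Replace G (2 * n) (n - 1)).underlying.Adj (Sum.inl x) (Sum.inl y) := by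
  have hD : n - 1 + 1 = n := by omega
  rintro ⟨hne, hadj | hadj⟩ <;>
  · obtain ⟨e, i, h1, h2⟩ := hadj
    rcases toVert_eq_inl h1.symm with ⟨h0, _⟩ | ⟨h0, _⟩ <;>
    rcases toVert_eq_inl h2.symm with ⟨h0', _⟩ | ⟨h0', _⟩ <;>
    · simp only [cyc] at h0'
      have hlt := i.isLt
      rcases Nat.lt_or_ge (i.val + 1) (2 * n) with h' | h'
      · rw [Nat.mod_eq_of_lt h'] at h0'; omega
      · rw [show i.val + 1 = 2 * n by omega, Nat.mod_self] at h0'; omega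

end Helpers2

section Helpers3

variable {V : Type*} {G : Digraph V}

set_option maxHeartbeats 1000000 in
/-- Any walk between two distinct original vertices in the replacement graph has
length at least `n`. -/
lemma walk_long {n : ℕ} (hn : 2 ≤ n) :
    ∀ (ℓ : ℕ) (W : ℕ → RVert G (2 * n) (n - 1)),
    (∀ k < ℓ, (Replace G (2 * n) (n - 1)).underlying.Adj (W k) (W (k + 1))) →
    ∀ x y : V, W 0 = Sum.inl x → W ℓ = Sum.inl y → x ≠ y → n ≤ ℓ := by
  have hD : n - 1 + 1 = n := by omega
  intro ℓ
  induction ℓ using Nat.strong_induction_on with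
  | _ ℓ IH =>
  intro W hadj x y h0 hl hxy
  by_cases hint : ∃ k, 0 < k ∧ k < ℓ ∧ ∃ z : V, W k = Sum.inl z
  · obtain ⟨k, hk0, hkl, z, hz⟩ := hint
    by_cases hzx : z = x
    · subst hzx
      have hn' : n ≤ ℓ - k := by
        refine IH (ℓ - k) (by omega) (fun j => W (k + j)) ?_ z y ?_ ?_ hxy
        · intro j hj
          have := hadj (k + j) (by omega)
          simpa [Nat.add_assoc] using this
        · simpa using hz
        · show W (k + (ℓ - k)) = Sum.inl y
          rw [show k + (ℓ - k) = ℓ by omega]; exact hl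
      omega
    · have hn' : n ≤ k := by
        refine IH k (by omega) W (fun j hj => hadj j (by omega)) x z h0 hz
          (fun h => hzx h.symm)
      omega
  · -- no interior original vertices
    have hℓ1 : 1 ≤ ℓ := by
      rcases Nat.eq_zero_or_pos ℓ with h | h
      · subst h; rw [h0] at hl; exact absurd (Sum.inl.inj hl) hxy
      · exact h
    have hℓ2 : 2 ≤ ℓ := by
      rcases Nat.lt_or_ge ℓ 2 with h | h
      · exfalso
        have h1 : ℓ = 1 := by omega
        have h2 := hadj 0 (by omega)
        rw [h0, show (0 : ℕ) + 1 = ℓ by omega, hl] at h2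
        exact no_adj_inl_inl hn h2
      · exact h
    have hinr : ∀ k, 0 < k → k < ℓ →
        ∃ ep, W k = Sum.inr ep := by
      intro k hk1 hk2
      rcases hWk : W k with z | ep
      · exact absurd ⟨k, hk1, hk2, z, hWk⟩ hint
      · exact ⟨ep, rfl⟩
    obtain ⟨⟨e1, p1⟩, hW1⟩ := hinr 1 one_pos (by omega)
    have chain : ∀ k, 1 ≤ k → k ≤ ℓ - 1 →
        ∃ p : {i : Fin (2 * n) // i.val ≠ 0 ∧ i.val ≠ (n - 1) + 1},
          W k = Sum.inr (e1, p) ∧ (p.1.val < n ↔ p1.1.val < n) ∧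
          p.1.val ≤ p1.1.val + (k - 1) ∧ p1.1.val ≤ p.1.val + (k - 1) := by
      intro k
      induction k with
      | zero => omega
      | succ m IHm =>
        intro _ hk2
        rcases Nat.eq_zero_or_pos m with hm | hm
        · subst hm
          exact ⟨p1, hW1, Iff.rfl, by omega, by omega⟩
        · obtain ⟨p, hWm, hside, hub, hlb⟩ := IHm (by omega) (by omega)
          obtain ⟨⟨e', p'⟩, hW'⟩ := hinr (m + 1) (by omega) (by omega)
          have hadjm := hadj m (by omega)
          rw [hWm, hW'] at hadjm
          obtain ⟨he, hstep⟩ := adj_inr_inr_val hadjm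
          subst he
          refine ⟨p', hW', ?_⟩
          have c1 : p.1.val ≠ 0 := p.2.1
          have c2 : p.1.val ≠ n := by have := p.2.2; omega
          have c3 : p.1.val < 2 * n := p.1.isLt
          have c4 : p'.1.val ≠ 0 := p'.2.1
          have c5 : p'.1.val ≠ n := by have := p'.2.2; omega
          have c6 : p'.1.val < 2 * n := p'.1.isLt
          have hs : (p.1.val < n ∧ p1.1.val < n) ∨ (¬ p.1.val < n ∧ ¬ p1.1.val < n) := by
            tauto
          refine ⟨?_, by omega, by omega⟩
          omega
    obtain ⟨pm, hWm, hside, hub, hlb⟩ := chain (ℓ - 1) (by omega) le_rfl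
    have hadj0 := hadj 0 (by omega)
    rw [h0, hW1] at hadj0
    have hx := adj_inl_inr_val hn hadj0
    have hadjl := hadj (ℓ - 1) (by omega)
    rw [hWm, show ℓ - 1 + 1 = ℓ by omega, hl] at hadjl
    have hy := adj_inl_inr_val hn hadjl.symm
    have c1 : p1.1.val ≠ 0 := p1.2.1
    have c2 : p1.1.val ≠ n := by have := p1.2.2; omega
    have c3 : p1.1.val < 2 * n := p1.1.isLt
    have c4 : pm.1.val ≠ 0 := pm.2.1
    have c5 : pm.1.val ≠ n := by have := pm.2.2; omega
    have c6 : pm.1.val < 2 * n := pm.1.isLt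
    have hs : (pm.1.val < n ∧ p1.1.val < n) ∨ (¬ pm.1.val < n ∧ ¬ p1.1.val < n) := by
      tauto
    rcases hx with ⟨hx, hq1⟩ | ⟨hx, hq1⟩ <;> rcases hy with ⟨hy, hqm⟩ | ⟨hy, hqm⟩
    · exact absurd (hx.trans hy.symm) hxy
    · omega
    · omega
    · exact absurd (hx.trans hy.symm) hxy

end Helpers3

section Helpers4

lemma three_distinct {N : ℕ} (hN : 4 ≤ N) (u : Fin N) :
    ∃ a b c : Fin N, a ≠ b ∧ a ≠ c ∧ b ≠ c ∧ a ≠ u ∧ b ≠ u ∧ c ≠ u := by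
  refine ⟨⟨if u.val = 0 then 1 else 0, by split_ifs <;> omega⟩,
    ⟨if u.val ≤ 1 then 2 else 1, by split_ifs <;> omega⟩,
    ⟨if u.val ≤ 2 then 3 else 2, by split_ifs <;> omega⟩, ?_, ?_, ?_, ?_, ?_, ?_⟩ <;>
  · simp only [Ne, Fin.ext_iff, Fin.val_mk]
    split_ifs <;> first | exact not_false | omega

lemma subdiv_adj_nb {N d : ℕ} (hd : 1 ≤ d) (u w : Fin N) (hw : w ≠ u) :
    (Subdiv (⊤ : SimpleGraph (Fin N)) d).Adj (Sum.inl u)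
      (Sum.inr (⟨s(u, w), by simpa using hw.symm⟩,
        if u < w then ⟨0, by omega⟩ else ⟨d - 1, by omega⟩)) := by
  left
  by_cases hlt : u < w
  · left
    refine ⟨by simp [hlt], by simp, ?_⟩
    intro z hz
    rcases Sym2.mem_iff.mp hz with rfl | rfl
    · exact le_refl _
    · exact le_of_lt hlt
  · right
    refine ⟨by simp [hlt], by simp, ?_⟩
    intro z hz
    rcases Sym2.mem_iff.mp hz with rfl | rfl
    · exact le_refl _
    · exact le_of_not_gt hlt

lemma nb_injective {N d : ℕ} (hd : 1 ≤ d) (u : Fin N) {v v' : Fin N}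
    (hv : v ≠ u) (hv' : v' ≠ u)
    (h : (Sum.inr (⟨s(u, v), by simpa using hv.symm⟩,
            if u < v then ⟨0, by omega⟩ else ⟨d - 1, by omega⟩) :
          (Fin N) ⊕ ((⊤ : SimpleGraph (Fin N)).edgeSet × Fin d))
        = Sum.inr (⟨s(u, v'), by simpa using hv'.symm⟩,
            if u < v' then ⟨0, by omega⟩ else ⟨d - 1, by omega⟩)) :
    v = v' := by
  simp only [Sum.inr.injEq, Prod.mk.injEq, Subtype.mk.injEq] at h
  rcases Sym2.eq_iff.mp h.1 with ⟨-, h2⟩ | ⟨h2, h3⟩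
  · exact h2
  · exact absurd h3 hv

end Helpers4

set_option maxHeartbeats 1600000 in
/-- The class of underlying undirected graphs of `G*(C_{2n},a,b)` (with `G`
a finite oriented graph, `n = |V(G)|`, and `a`, `b` at directed distance `n` on the cycle
of length `2n`) is nowhere dense: for every `d ≥ 1` and every `N ≥ d + 3`, the `d`-th
subdivision of `K_N` is a subgraph of no graph in this class. -/
theorem stmt14 (d : ℕ) (hd : 1 ≤ d) (N : ℕ) (hN : d + 3 ≤ N)
    {V : Type*} [Fintype V] (G : Digraph V) (hG : G.Oriented) :
    ¬ ∃ f, IsSubgraphEmb (Subdiv (⊤ : SimpleGraph (Fin N)) d)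
      (Replace G (2 * Fintype.card V) (Fintype.card V - 1)).underlying f := by
  rintro ⟨f, hfinj, hfadj⟩
  have hN4 : 4 ≤ N := by omega
  -- every branch vertex of the subdivision maps to an original vertex of `G`
  have hbranch : ∀ u : Fin N, ∃ x : V, f (Sum.inl u) = Sum.inl x := by
    intro u
    obtain ⟨a, b, c, hab, hac, hbc, hau, hbu, hcu⟩ := three_distinct hN4 u
    have ha := hfadj _ _ (subdiv_adj_nb hd u a hau)
    have hb := hfadj _ _ (subdiv_adj_nb hd u b hbu)
    have hc := hfadj _ _ (subdiv_adj_nb hd u c hcu)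
    exact inl_of_three_neighbors ha hb hc
      (fun h => hab (nb_injective hd u hau hbu (hfinj h)))
      (fun h => hac (nb_injective hd u hau hcu (hfinj h)))
      (fun h => hbc (nb_injective hd u hbu hcu (hfinj h)))
  choose g hg using hbranch
  have hginj : Function.Injective g := by
    intro a b hab
    have h : f (Sum.inl a) = f (Sum.inl b) := by rw [hg a, hg b, hab]
    exact Sum.inl.inj (hfinj h)
  by_cases hsize : Fintype.card V ≤ d + 2
  · -- counting argument
    have hcard := Fintype.card_le_of_injective g hginj
    rw [Fintype.card_fin] at hcard
    omega
  · -- distance argument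
    push_neg at hsize
    have hn2 : 2 ≤ Fintype.card V := by omega
    set u0 : Fin N := ⟨0, by omega⟩ with hu0
    set u1 : Fin N := ⟨1, by omega⟩ with hu1
    have h01 : u0 ≠ u1 := by simp [hu0, hu1, Fin.ext_iff]
    have h01' : u0 < u1 := by simp [hu0, hu1, Fin.lt_def]
    set e0 : (⊤ : SimpleGraph (Fin N)).edgeSet := ⟨s(u0, u1), by simpa using h01⟩ with he0
    set P : ℕ → (Fin N) ⊕ ((⊤ : SimpleGraph (Fin N)).edgeSet × Fin d) := fun k =>
      if k = 0 then Sum.inl u0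
      else if k ≤ d then Sum.inr (e0, ⟨min (k - 1) (d - 1), by omega⟩)
      else Sum.inl u1 with hP
    have hP0 : P 0 = Sum.inl u0 := by simp [hP]
    have hPmid : ∀ k, 1 ≤ k → k ≤ d →
        P k = Sum.inr (e0, ⟨min (k - 1) (d - 1), by omega⟩) := by
      intro k hk1 hk2
      rw [hP]
      simp only
      rw [if_neg (by omega), if_pos hk2]
    have hPlast : P (d + 1) = Sum.inl u1 := by
      rw [hP]
      simp only
      rw [if_neg (by omega), if_neg (by omega)]
    have hmem0 : u0 ∈ e0.val := by rw [he0]; simp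
    have hmem1 : u1 ∈ e0.val := by rw [he0]; simp
    have hadjP : ∀ k < d + 1, (Subdiv (⊤ : SimpleGraph (Fin N)) d).Adj (P k) (P (k + 1)) := by
      intro k hk
      rcases Nat.eq_zero_or_pos k with hk0 | hk0
      · subst hk0
        rw [hP0, hPmid 1 le_rfl hd]
        left; left
        refine ⟨by simp, hmem0, ?_⟩
        intro z hz
        rw [he0] at hz
        rcases Sym2.mem_iff.mp hz with rfl | rfl
        · exact le_refl _
        · exact le_of_lt h01'
      · rcases Nat.lt_or_ge k d with hkd | hkd
        · -- internal step
          rw [hPmid k hk0 (by omega), hPmid (k + 1) (by omega) (by omega)]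
          left
          refine ⟨rfl, ?_⟩
          simp only [Fin.val_mk]
          omega
        · -- last step: k = d
          have hkd' : k = d := by omega
          subst hkd'
          rw [hPmid k hk0 le_rfl, hPlast]
          right; right
          refine ⟨by simp, hmem1, ?_⟩
          intro z hz
          rw [he0] at hz
          rcases Sym2.mem_iff.mp hz with rfl | rfl
          · exact le_of_lt h01'
          · exact le_refl _
    have hwalk := walk_long hn2 (d + 1) (fun k => f (P k))
      (fun k hk => hfadj _ _ (hadjP k hk)) (g u0) (g u1)
      (by have := hg u0; rw [← hP0] at this; exact this)
      (by have := hg u1; rw [← hPlast] at this; exact this)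
      (fun h => h01 (hginj h))
    omega
end
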